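/- arXiv:1907.02353 — 2 statements merged into one kernel-verified Lean document; each statement's English description precedes it below -/
import Mathlib

section
/- Let G be a finite undirected graph with disjoint vertex sets S and T, and let Z_1,...,Z_k be the drainage of (G,S,T). Then every minimum edge (S,T)-cut X has a front: there exists a smallest index i = i(X) with 1 ≤ i ≤ k such that X ∩ Z_i ≠ ∅, and moreover X contains no edge with both endpoints in R(Z_{i(X)},S). -/
open SimpleGraph

variable {V : Type*}

/-- `X` is an edge `(S,T)`-cut: after deleting the edges of `X`,
no vertex of `S` can reach a vertex of `T`. -/
def EdgeCut (G : SimpleGraph V) (S T : Set V) (X : Finset (Sym2 V)) : Prop :=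
  ∀ s ∈ S, ∀ t ∈ T, ¬ (G.deleteEdges ↑X).Reachable s t

/-- `X` is a minimum edge `(S,T)`-cut. -/
def MinEdgeCut (G : SimpleGraph V) (S T : Set V) (X : Finset (Sym2 V)) : Prop :=
  EdgeCut G S T X ∧ ∀ Y : Finset (Sym2 V), EdgeCut G S T Y → X.card ≤ Y.card

/-- `R(X,S)`: vertices reachable from `S` in `G` deprived of the edges of `X`. -/
def Rside (G : SimpleGraph V) (X : Finset (Sym2 V)) (S : Set V) : Set V :=
  {v | ∃ s ∈ S, (G.deleteEdges ↑X).Reachable s v}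

/-- A minimum closest `(S,T)`-cut: a minimum cut `Z` such that no other cut `X'`
satisfies `|X'| ≤ |Z|` and `R(X',S) ⊆ R(Z,S)`. -/
def MinClosestCut (G : SimpleGraph V) (S T : Set V) (Z : Finset (Sym2 V)) : Prop :=
  MinEdgeCut G S T Z ∧
    ∀ X' : Finset (Sym2 V), EdgeCut G S T X' → X' ≠ Z →
      ¬ (X'.card ≤ Z.card ∧ Rside G X' S ⊆ Rside G Z S)

/-- `G` deprived of the vertex set `U` (kept on the same vertex type). -/
def deprive (G : SimpleGraph V) (U : Set V) : SimpleGraph V where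
  Adj u v := G.Adj u v ∧ u ∉ U ∧ v ∉ U
  symm := ⟨fun _ _ ⟨h, hu, hv⟩ => ⟨h.symm, hv, hu⟩⟩
  loopless := ⟨fun u ⟨h, _, _⟩ => G.ne_of_adj h rfl⟩

/-- `V^T(Z)` relative to sources `S`: the endpoints of edges of `Z` that are not
reachable from `S` once `Z` is removed. -/
def nextSources (G : SimpleGraph V) (Z : Finset (Sym2 V)) (S : Set V) : Set V :=
  {v | v ∉ Rside G Z S ∧ ∃ u, s(u, v) ∈ Z}

/-- The drainage `Z 1, ..., Z k` of the instance `(G,S,T)` with minimum cut size `p`: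
`Z 1` is the minimum closest `(S,T)`-cut, and `Z (i+1)` is the minimum closest
`(S_{i+1},T)`-cut of size `p` in `G` deprived of `R(Z i, S)`; the construction stops
at `k`, when no further cut of size `p` exists. -/
def IsDrainage (G : SimpleGraph V) (S T : Set V) (p k : ℕ)
    (Z : ℕ → Finset (Sym2 V)) : Prop :=
  1 ≤ k ∧
  MinClosestCut G S T (Z 1) ∧ (Z 1).card = p ∧
  (∀ i, 1 ≤ i → i < k →
    MinClosestCut (deprive G (Rside G (Z i) S)) (nextSources G (Z i) S) T (Z (i + 1)) ∧
      (Z (i + 1)).card = p) ∧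
  (∀ X : Finset (Sym2 V),
    EdgeCut (deprive G (Rside G (Z k) S)) (nextSources G (Z k) S) T X → p < X.card)

section Aux
/-! ### basics -/
variable [DecidableEq V]

lemma walk_closed {H : SimpleGraph V} {P : Set V}
    (hP : ∀ ⦃u v : V⦄, H.Adj u v → u ∈ P → v ∈ P) {a b : V} (w : H.Walk a b) :
    a ∈ P → b ∈ P := by
  induction w with
  | nil => exact id
  | cons h _ ih => exact fun ha => ih (hP h ha)

lemma reach_closed {H : SimpleGraph V} {P : Set V}
    (hP : ∀ ⦃u v : V⦄, H.Adj u v → u ∈ P → v ∈ P) {a b : V}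
    (hr : H.Reachable a b) (ha : a ∈ P) : b ∈ P := by
  obtain ⟨w⟩ := hr
  exact walk_closed hP w ha

lemma src_subset_Rside {H : SimpleGraph V} {W : Finset (Sym2 V)} {S' : Set V} :
    S' ⊆ Rside H W S' := fun s hs => ⟨s, hs, Reachable.refl s⟩

lemma Rside_adj {H : SimpleGraph V} {W : Finset (Sym2 V)} {S' : Set V} {u v : V}
    (hu : u ∈ Rside H W S') (h : (H.deleteEdges ↑W).Adj u v) : v ∈ Rside H W S' := by
  obtain ⟨s, hs, hr⟩ := hu
  exact ⟨s, hs, hr.trans h.reachable⟩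

lemma edgeCut_iff {H : SimpleGraph V} {S' T : Set V} {W : Finset (Sym2 V)} :
    EdgeCut H S' T W ↔ ∀ t ∈ T, t ∉ Rside H W S' := by
  constructor
  · rintro h t ht ⟨s, hs, hr⟩
    exact h s hs t ht hr
  · intro h s hs t ht hr
    exact h t ht ⟨s, hs, hr⟩

lemma deleteEdges_erase_not_edge {H : SimpleGraph V} {W : Finset (Sym2 V)} {e : Sym2 V}
    (he : e ∉ H.edgeSet) : H.deleteEdges ↑(W.erase e) = H.deleteEdges ↑W := by
  ext u v
  simp only [deleteEdges_adj, Finset.mem_coe, Finset.mem_erase]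
  constructor
  · rintro ⟨ha, h2⟩
    exact ⟨ha, fun hw => h2 ⟨fun hee => he (hee ▸ ha), hw⟩⟩
  · rintro ⟨ha, h2⟩
    exact ⟨ha, fun hw => h2 hw.2⟩

lemma mincut_edge {H : SimpleGraph V} {S' T : Set V} {W : Finset (Sym2 V)}
    (h : MinEdgeCut H S' T W) {e : Sym2 V} (he : e ∈ W) : e ∈ H.edgeSet := by
  by_contra hne
  have hcut : EdgeCut H S' T (W.erase e) := by
    intro s hs t ht
    rw [deleteEdges_erase_not_edge hne]
    exact h.1 s hs t ht
  have := h.2 _ hcut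
  rw [Finset.card_erase_of_mem he] at this
  have hpos : 0 < W.card := Finset.card_pos.2 ⟨e, he⟩
  omega

lemma Rside_erase_subset {H : SimpleGraph V} {S' : Set V} {W : Finset (Sym2 V)} {u v : V}
    (he : s(u, v) ∈ W) (hiff : u ∈ Rside H W S' ↔ v ∈ Rside H W S') :
    Rside H (W.erase s(u, v)) S' ⊆ Rside H W S' := by
  rintro x ⟨s, hs, hr⟩
  refine reach_closed (P := Rside H W S') ?_ hr (src_subset_Rside hs)
  intro a b hab ha
  rw [deleteEdges_adj] at hab
  obtain ⟨hadj, hnm⟩ := hab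
  by_cases hw : s(a, b) ∈ W
  · have : s(a, b) = s(u, v) := by
      by_contra hne
      exact hnm (Finset.mem_coe.2 (Finset.mem_erase.2 ⟨hne, hw⟩))
    rw [Sym2.eq_iff] at this
    rcases this with ⟨rfl, rfl⟩ | ⟨rfl, rfl⟩
    · exact hiff.1 ha
    · exact hiff.2 ha
  · exact Rside_adj ha (by rw [deleteEdges_adj]; exact ⟨hadj, hw⟩)

lemma mincut_not_iff {H : SimpleGraph V} {S' T : Set V} {W : Finset (Sym2 V)}
    (h : MinEdgeCut H S' T W) {u v : V} (he : s(u, v) ∈ W) :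
    ¬ (u ∈ Rside H W S' ↔ v ∈ Rside H W S') := by
  intro hiff
  have hcut : EdgeCut H S' T (W.erase s(u, v)) := by
    rw [edgeCut_iff]
    intro t ht hmem
    exact (edgeCut_iff.1 h.1) t ht (Rside_erase_subset he hiff hmem)
  have := h.2 _ hcut
  rw [Finset.card_erase_of_mem he] at this
  have hpos : 0 < W.card := Finset.card_pos.2 ⟨_, he⟩
  omega

set_option linter.unusedSectionVars false

variable [Fintype V]

/-! ### boundary -/

noncomputable def bnd (H : SimpleGraph V) (U : Set V) : Finset (Sym2 V) :=
  Set.Finite.toFinset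
    (Set.toFinite {e : Sym2 V | ∃ u v, e = s(u, v) ∧ H.Adj u v ∧ u ∈ U ∧ v ∉ U})

lemma mem_bnd {H : SimpleGraph V} {U : Set V} {u v : V} :
    s(u, v) ∈ bnd H U ↔ H.Adj u v ∧ ((u ∈ U ∧ v ∉ U) ∨ (v ∈ U ∧ u ∉ U)) := by
  simp only [bnd, Set.Finite.mem_toFinset, Set.mem_setOf_eq]
  constructor
  · rintro ⟨a, b, hab, hadj, ha, hb⟩
    rw [Sym2.eq_iff] at hab
    rcases hab with ⟨rfl, rfl⟩ | ⟨rfl, rfl⟩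
    · exact ⟨hadj, Or.inl ⟨ha, hb⟩⟩
    · exact ⟨hadj.symm, Or.inr ⟨ha, hb⟩⟩
  · rintro ⟨hadj, ⟨ha, hb⟩ | ⟨ha, hb⟩⟩
    · exact ⟨u, v, rfl, hadj, ha, hb⟩
    · exact ⟨v, u, Sym2.eq_swap, hadj.symm, ha, hb⟩

lemma bnd_subset_cut {H : SimpleGraph V} {S' : Set V} {W : Finset (Sym2 V)} :
    bnd H (Rside H W S') ⊆ W := by
  intro e he
  induction e with
  | h u v =>
    rw [mem_bnd] at he
    obtain ⟨hadj, hor⟩ := he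
    by_contra hnw
    rcases hor with ⟨ha, hb⟩ | ⟨ha, hb⟩
    · exact hb (Rside_adj ha (by rw [deleteEdges_adj]; exact ⟨hadj, hnw⟩))
    · refine hb (Rside_adj ha ?_)
      rw [deleteEdges_adj]
      refine ⟨hadj.symm, ?_⟩
      rw [Finset.mem_coe, Sym2.eq_swap]
      exact hnw

lemma Rside_bnd_subset {H : SimpleGraph V} {S' : Set V} {U : Set V} (hS : S' ⊆ U) :
    Rside H (bnd H U) S' ⊆ U := by
  rintro x ⟨s, hs, hr⟩
  refine reach_closed (P := U) ?_ hr (hS hs)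
  intro a b hab ha
  rw [deleteEdges_adj] at hab
  by_contra hb
  exact hab.2 (Finset.mem_coe.2 (mem_bnd.2 ⟨hab.1, Or.inl ⟨ha, hb⟩⟩))

lemma bnd_edgeCut {H : SimpleGraph V} {S' T U : Set V} (hS : S' ⊆ U)
    (hT : ∀ t ∈ T, t ∉ U) : EdgeCut H S' T (bnd H U) := by
  rw [edgeCut_iff]
  intro t ht hmem
  exact hT t ht (Rside_bnd_subset hS hmem)

lemma bnd_submod {H : SimpleGraph V} (A B : Set V) :
    (bnd H (A ∩ B)).card + (bnd H (A ∪ B)).card ≤ (bnd H A).card + (bnd H B).card := by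
  have h1 : bnd H (A ∩ B) ∪ bnd H (A ∪ B) ⊆ bnd H A ∪ bnd H B := by
    intro e
    induction e with
    | h u v =>
      simp only [Finset.mem_union, mem_bnd, Set.mem_inter_iff, Set.mem_union]
      tauto
  have h2 : bnd H (A ∩ B) ∩ bnd H (A ∪ B) ⊆ bnd H A ∩ bnd H B := by
    intro e
    induction e with
    | h u v =>
      simp only [Finset.mem_inter, mem_bnd, Set.mem_inter_iff, Set.mem_union]
      tauto
  calc (bnd H (A ∩ B)).card + (bnd H (A ∪ B)).card
      = (bnd H (A ∩ B) ∪ bnd H (A ∪ B)).card + (bnd H (A ∩ B) ∩ bnd H (A ∪ B)).card := by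
        rw [Finset.card_union_add_card_inter]
    _ ≤ (bnd H A ∪ bnd H B).card + (bnd H A ∩ bnd H B).card :=
        Nat.add_le_add (Finset.card_le_card h1) (Finset.card_le_card h2)
    _ = (bnd H A).card + (bnd H B).card := Finset.card_union_add_card_inter _ _

lemma closest_subset {H : SimpleGraph V} {S' T : Set V} {Zc X : Finset (Sym2 V)}
    (hZc : MinClosestCut H S' T Zc) (hX : MinEdgeCut H S' T X) :
    Rside H Zc S' ⊆ Rside H X S' := by
  set A := Rside H X S' with hA
  set B := Rside H Zc S' with hB
  have hSA : S' ⊆ A := src_subset_Rside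
  have hSB : S' ⊆ B := src_subset_Rside
  have hTA : ∀ t ∈ T, t ∉ A := edgeCut_iff.1 hX.1
  have hTB : ∀ t ∈ T, t ∉ B := edgeCut_iff.1 hZc.1.1
  have hcut1 : EdgeCut H S' T (bnd H (A ∩ B)) :=
    bnd_edgeCut (fun s hs => ⟨hSA hs, hSB hs⟩) (fun t ht h => hTA t ht h.1)
  have hcut2 : EdgeCut H S' T (bnd H (A ∪ B)) :=
    bnd_edgeCut (fun s hs => Or.inl (hSA hs))
      (fun t ht h => h.elim (hTA t ht) (hTB t ht))
  have c1 : X.card ≤ (bnd H (A ∩ B)).card := hX.2 _ hcut1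
  have c2 : Zc.card ≤ (bnd H (A ∪ B)).card := hZc.1.2 _ hcut2
  have c3 : (bnd H A).card ≤ X.card := Finset.card_le_card bnd_subset_cut
  have c4 : (bnd H B).card ≤ Zc.card := Finset.card_le_card bnd_subset_cut
  have c5 := bnd_submod (H := H) A B
  have c0 : X.card = Zc.card := le_antisymm (hX.2 _ hZc.1.1) (hZc.1.2 _ hX.1)
  have hle : (bnd H (A ∩ B)).card ≤ Zc.card := by omega
  by_cases heq : bnd H (A ∩ B) = Zc
  · intro x hx
    have hx' : x ∈ Rside H (bnd H (A ∩ B)) S' := by rw [heq]; exact hx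
    exact (Rside_bnd_subset (U := A ∩ B) (fun s hs => ⟨hSA hs, hSB hs⟩) hx').1
  · have hsub : Rside H (bnd H (A ∩ B)) S' ⊆ B := fun x hx =>
      (Rside_bnd_subset (U := A ∩ B) (fun s hs => ⟨hSA hs, hSB hs⟩) hx).2
    exact absurd ⟨hle, hsub⟩ (hZc.2 _ hcut1 heq)

/-! ### stage machinery -/

lemma deprive_empty {G : SimpleGraph V} : deprive G (∅ : Set V) = G := by
  ext u v
  simp [deprive]

lemma exit_mem_next {G : SimpleGraph V} {S : Set V} {Z' : Finset (Sym2 V)} {u v : V}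
    (hadj : G.Adj u v) (hu : u ∈ Rside G Z' S) (hv : v ∉ Rside G Z' S) :
    v ∈ nextSources G Z' S := by
  refine ⟨hv, u, ?_⟩
  by_contra hn
  exact hv (Rside_adj hu (by rw [deleteEdges_adj]; exact ⟨hadj, hn⟩))

lemma Rside_mono_of_disj {G : SimpleGraph V} {S : Set V} {Z' W : Finset (Sym2 V)}
    (hW : ∀ u v, s(u, v) ∈ W → u ∉ Rside G Z' S) :
    Rside G Z' S ⊆ Rside G W S := by
  rintro x ⟨s, hs, hr⟩
  refine (reach_closed (P := Rside G Z' S ∩ Rside G W S) ?_ hr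
    ⟨src_subset_Rside hs, src_subset_Rside hs⟩).2
  rintro a b hab ⟨haZ, haW⟩
  rw [deleteEdges_adj] at hab
  have hbZ : b ∈ Rside G Z' S := Rside_adj haZ (by rw [deleteEdges_adj]; exact hab)
  have hnW : s(a, b) ∉ W := fun h => hW a b h haZ
  exact ⟨hbZ, Rside_adj haW (by rw [deleteEdges_adj]; exact ⟨hab.1, hnW⟩)⟩

lemma stage_h5 {G : SimpleGraph V} {S : Set V} {Z' W : Finset (Sym2 V)}
    (hJ : ∀ u v, s(u, v) ∈ Z' → G.Adj u v ∧ (u ∈ Rside G Z' S ∨ v ∈ Rside G Z' S))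
    (hW : ∀ u v, s(u, v) ∈ W → u ∉ Rside G Z' S)
    (hdisj : ∀ e ∈ Z', e ∉ W) :
    nextSources G Z' S ⊆ Rside G W S := by
  rintro v ⟨hvR, u, huv⟩
  obtain ⟨hadj, hor⟩ := hJ u v huv
  have hu : u ∈ Rside G Z' S := hor.resolve_right hvR
  have hu' : u ∈ Rside G W S := Rside_mono_of_disj hW hu
  exact Rside_adj hu' (by rw [deleteEdges_adj]; exact ⟨hadj, hdisj _ huv⟩)

lemma claim_full {G : SimpleGraph V} {S : Set V} (R' S' : Set V) (W : Finset (Sym2 V))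
    (h2 : ∀ u v, G.Adj u v → u ∈ R' → v ∉ R' → v ∈ S')
    (h3 : S ⊆ R' ∪ S')
    (hW : ∀ u v, s(u, v) ∈ W → G.Adj u v ∧ u ∉ R' ∧ v ∉ R')
    (h4 : R' ⊆ Rside G W S)
    (h5 : S' ⊆ Rside G W S) :
    Rside G W S = R' ∪ Rside (deprive G R') W S' := by
  apply Set.eq_of_subset_of_subset
  · rintro x ⟨s, hs, hr⟩
    refine reach_closed (P := R' ∪ Rside (deprive G R') W S') ?_ hr ?_
    · intro a b hab hmem
      rw [deleteEdges_adj] at hab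
      obtain ⟨hadj, hnW⟩ := hab
      by_cases hbR : b ∈ R'
      · exact Or.inl hbR
      by_cases haR : a ∈ R'
      · exact Or.inr (src_subset_Rside (h2 a b hadj haR hbR))
      · rcases hmem with h | h
        · exact absurd h haR
        · exact Or.inr (Rside_adj h (by
            rw [deleteEdges_adj]
            exact ⟨⟨hadj, haR, hbR⟩, hnW⟩))
    · rcases h3 hs with h | h
      · exact Or.inl h
      · exact Or.inr (src_subset_Rside h)
  · apply Set.union_subset h4
    rintro x ⟨s', hs', hr⟩
    refine reach_closed (P := Rside G W S) ?_ hr (h5 hs')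
    intro a b hab ha
    rw [deleteEdges_adj] at hab
    exact Rside_adj ha (by rw [deleteEdges_adj]; exact ⟨hab.1.1, hab.2⟩)

lemma stage_step {G : SimpleGraph V} {S T : Set V} {X Zn : Finset (Sym2 V)} {R' S' : Set V}
    (hmode : (R' = ∅ ∧ S' = S) ∨
      (∃ Z' : Finset (Sym2 V), R' = Rside G Z' S ∧ S' = nextSources G Z' S ∧
        (∀ u v, s(u, v) ∈ Z' → G.Adj u v ∧ (u ∈ R' ∨ v ∈ R'))))
    (hXm : MinEdgeCut (deprive G R') S' T X)
    (hmcc : MinClosestCut (deprive G R') S' T Zn) :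
    Rside G Zn S ⊆ Rside G X S ∧
    (X ∩ Zn = ∅ →
      EdgeCut (deprive G (Rside G Zn S)) (nextSources G Zn S) T X ∧
      (∀ u v, s(u, v) ∈ Zn →
        G.Adj u v ∧ (u ∈ Rside G Zn S ∨ v ∈ Rside G Zn S))) := by
  have hWZn : ∀ u v, s(u, v) ∈ Zn → G.Adj u v ∧ u ∉ R' ∧ v ∉ R' := by
    intro u v h
    have h' := mincut_edge hmcc.1 h
    rw [SimpleGraph.mem_edgeSet] at h'
    exact h'
  have hWX : ∀ u v, s(u, v) ∈ X → G.Adj u v ∧ u ∉ R' ∧ v ∉ R' := by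
    intro u v h
    have h' := mincut_edge hXm h
    rw [SimpleGraph.mem_edgeSet] at h'
    exact h'
  -- claim C for any such W
  have hcore : ∀ W : Finset (Sym2 V),
      (∀ u v, s(u, v) ∈ W → G.Adj u v ∧ u ∉ R' ∧ v ∉ R') →
      Rside G W S = R' ∪ Rside (deprive G R') W S' := by
    intro W hWe
    rcases hmode with ⟨hR0, hS0⟩ | ⟨Z', hRZ, hSZ, hJ⟩
    · subst hR0; subst hS0
      refine claim_full _ _ _ ?_ ?_ hWe ?_ ?_
      · intro u v _ hu _
        exact absurd hu (Set.notMem_empty u)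
      · exact fun s hs => Or.inr hs
      · exact Set.empty_subset _
      · exact src_subset_Rside
    · subst hRZ; subst hSZ
      have hdis : ∀ e ∈ Z', e ∉ W := by
        intro e heZ heW
        induction e with
        | h u v =>
          rcases (hJ u v heZ).2 with h | h
          · exact (hWe u v heW).2.1 h
          · exact (hWe u v heW).2.2 h
      refine claim_full _ _ _ ?_ ?_ hWe ?_ ?_
      · exact fun u v hadj hu hv => exit_mem_next hadj hu hv
      · exact fun s hs => Or.inl (src_subset_Rside hs)
      · exact Rside_mono_of_disj (fun u v h => (hWe u v h).2.1)
      · exact stage_h5 hJ (fun u v h => (hWe u v h).2.1) hdis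
  have cCZ := hcore Zn hWZn
  have cCX := hcore X hWX
  have hsub : Rside (deprive G R') Zn S' ⊆ Rside (deprive G R') X S' :=
    closest_subset hmcc hXm
  have part1 : Rside G Zn S ⊆ Rside G X S := by
    rw [cCZ, cCX]
    exact Set.union_subset_union_right _ hsub
  refine ⟨part1, ?_⟩
  intro hXZn
  have hnotinX : ∀ e ∈ Zn, e ∉ X := by
    intro e he hx
    exact Finset.eq_empty_iff_forall_notMem.1 hXZn e (Finset.mem_inter.2 ⟨hx, he⟩)
  have hJn : ∀ u v, s(u, v) ∈ Zn →
      G.Adj u v ∧ (u ∈ Rside G Zn S ∨ v ∈ Rside G Zn S) := by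
    intro u v h
    refine ⟨(hWZn u v h).1, ?_⟩
    have hni := mincut_not_iff hmcc.1 h
    have hor : u ∈ Rside (deprive G R') Zn S' ∨ v ∈ Rside (deprive G R') Zn S' := by
      tauto
    rcases hor with h' | h'
    · exact Or.inl (by rw [cCZ]; exact Or.inr h')
    · exact Or.inr (by rw [cCZ]; exact Or.inr h')
  refine ⟨?_, hJn⟩
  intro s' hs' t ht hreach
  obtain ⟨hvR, u, hus'⟩ := hs'
  have hni := mincut_not_iff hmcc.1 hus'
  have hs'ρ : s' ∉ Rside (deprive G R') Zn S' := fun h =>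
    hvR (by rw [cCZ]; exact Or.inr h)
  have huρ : u ∈ Rside (deprive G R') Zn S' := by tauto
  have huX : u ∈ Rside (deprive G R') X S' := hsub huρ
  have hs'X : s' ∈ Rside (deprive G R') X S' := by
    refine Rside_adj huX ?_
    rw [deleteEdges_adj]
    refine ⟨?_, ?_⟩
    · exact ⟨(hWZn u s' hus').1, (hWZn u s' hus').2.1, (hWZn u s' hus').2.2⟩
    · exact fun hm => hnotinX _ hus' (Finset.mem_coe.1 hm)
  have hR'sub : R' ⊆ Rside G Zn S := by
    rw [cCZ]; exact Set.subset_union_left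
  have htX : t ∈ Rside (deprive G R') X S' := by
    refine reach_closed (P := Rside (deprive G R') X S') ?_ hreach hs'X
    intro a b hab ha
    rw [deleteEdges_adj] at hab
    obtain ⟨hd, hnX⟩ := hab
    have hd' : G.Adj a b ∧ a ∉ Rside G Zn S ∧ b ∉ Rside G Zn S := hd
    refine Rside_adj ha ?_
    rw [deleteEdges_adj]
    exact ⟨⟨hd'.1, fun h => hd'.2.1 (hR'sub h), fun h => hd'.2.2 (hR'sub h)⟩, hnX⟩
  obtain ⟨s'', hs'', hr''⟩ := htX
  exact hXm.1 s'' hs'' t ht hr''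

def Qinv (G : SimpleGraph V) (S T : Set V) (Z : ℕ → Finset (Sym2 V))
    (X : Finset (Sym2 V)) (i : ℕ) : Prop :=
  MinEdgeCut (deprive G (if i = 0 then ∅ else Rside G (Z i) S))
      (if i = 0 then S else nextSources G (Z i) S) T X ∧
  (1 ≤ i → ∀ u v, s(u, v) ∈ Z i →
    G.Adj u v ∧ (u ∈ Rside G (Z i) S ∨ v ∈ Rside G (Z i) S))

lemma Qinv_step {G : SimpleGraph V} {S T : Set V} {Z : ℕ → Finset (Sym2 V)}
    {X : Finset (Sym2 V)} {i : ℕ} (hQ : Qinv G S T Z X i)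
    (hmcc : MinClosestCut (deprive G (if i = 0 then ∅ else Rside G (Z i) S))
      (if i = 0 then S else nextSources G (Z i) S) T (Z (i + 1))) :
    Rside G (Z (i + 1)) S ⊆ Rside G X S ∧
    (X ∩ Z (i + 1) = ∅ →
      EdgeCut (deprive G (Rside G (Z (i + 1)) S)) (nextSources G (Z (i + 1)) S) T X ∧
      (∀ u v, s(u, v) ∈ Z (i + 1) →
        G.Adj u v ∧ (u ∈ Rside G (Z (i + 1)) S ∨ v ∈ Rside G (Z (i + 1)) S))) := by
  obtain ⟨hXm, hJ⟩ := hQ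
  rcases Nat.eq_zero_or_pos i with rfl | hpos
  · rw [if_pos rfl] at hXm hmcc
    rw [if_pos rfl] at hXm hmcc
    exact stage_step (Or.inl ⟨rfl, rfl⟩) hXm hmcc
  · rw [if_neg hpos.ne'] at hXm hmcc
    rw [if_neg hpos.ne'] at hXm hmcc
    exact stage_step (Or.inr ⟨Z i, rfl, rfl, hJ hpos⟩) hXm hmcc

end Aux

/-- Every minimum edge `(S,T)`-cut `X` admits a front: a smallest
index `i` with `X ∩ Z i ≠ ∅`; moreover `X` has no edge with both endpoints in
`R(Z_{i(X)}, S)`. -/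
theorem min_cut_has_front
    [Fintype V] [DecidableEq V] (G : SimpleGraph V) (S T : Set V)
    (hST : Disjoint S T) (hS : S.Nonempty) (hT : T.Nonempty)
    (p k : ℕ) (Z : ℕ → Finset (Sym2 V))
    (hmin : ∃ X0 : Finset (Sym2 V), MinEdgeCut G S T X0 ∧ X0.card = p)
    (hZ : IsDrainage G S T p k Z)
    (X : Finset (Sym2 V)) (hX : MinEdgeCut G S T X) :
    ∃ i, 1 ≤ i ∧ i ≤ k ∧ (X ∩ Z i).Nonempty ∧
      (∀ j, 1 ≤ j → j < i → X ∩ Z j = ∅) ∧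
      ∀ u v, s(u, v) ∈ X → ¬ (u ∈ Rside G (Z i) S ∧ v ∈ Rside G (Z i) S) := by
  classical
  obtain ⟨hk1, hZ1, hZ1c, hZmid, hZfin⟩ := hZ
  obtain ⟨X0, hX0, hX0c⟩ := hmin
  have hXp : X.card = p := le_antisymm (hX0c ▸ hX.2 X0 hX0.1) (hX0c ▸ hX0.2 X hX.1)
  have hmccAll : ∀ i, i < k →
      MinClosestCut (deprive G (if i = 0 then ∅ else Rside G (Z i) S))
        (if i = 0 then S else nextSources G (Z i) S) T (Z (i + 1)) ∧
      (Z (i + 1)).card = p := by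
    intro i hik
    rcases Nat.eq_zero_or_pos i with rfl | hpos
    · rw [if_pos rfl, if_pos rfl, deprive_empty]
      exact ⟨hZ1, hZ1c⟩
    · rw [if_neg hpos.ne', if_neg hpos.ne']
      exact hZmid i hpos hik
  have main : ∀ i, i < k → (∀ j, 1 ≤ j → j ≤ i → X ∩ Z j = ∅) → Qinv G S T Z X i := by
    intro i
    induction i with
    | zero =>
      intro _ _
      refine ⟨?_, ?_⟩
      · rw [if_pos rfl, if_pos rfl, deprive_empty]
        exact hX
      · intro h
        exact absurd h (by omega)
    | succ n ih =>
      intro hlt havoid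
      have hQn := ih (by omega) (fun j h1 hj => havoid j h1 (by omega))
      have hstep := Qinv_step hQn (hmccAll n (by omega)).1
      have hXZ : X ∩ Z (n + 1) = ∅ := havoid (n + 1) (by omega) (le_refl _)
      obtain ⟨hcut, hJn⟩ := hstep.2 hXZ
      refine ⟨?_, fun _ => hJn⟩
      rw [if_neg (Nat.succ_ne_zero n), if_neg (Nat.succ_ne_zero n)]
      refine ⟨hcut, ?_⟩
      intro Y hY
      have h2 := (hmccAll (n + 1) hlt).1.1.2 Y hY
      have h3 := (hmccAll (n + 1) hlt).2
      omega
  have noesc : ∃ i, 1 ≤ i ∧ i ≤ k ∧ (X ∩ Z i).Nonempty := by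
    by_contra h
    push_neg at h
    have hemp : ∀ j, 1 ≤ j → j ≤ k → X ∩ Z j = ∅ := fun j h1 h2 =>
      h j h1 h2
    have hQ := main (k - 1) (by omega) (fun j h1 hj => hemp j h1 (by omega))
    have hstep := Qinv_step hQ (hmccAll (k - 1) (by omega)).1
    have hk' : k - 1 + 1 = k := by omega
    rw [hk'] at hstep
    obtain ⟨hcut, -⟩ := hstep.2 (hemp k hk1 le_rfl)
    have := hZfin X hcut
    omega
  set i0 := Nat.find noesc with hi0def
  obtain ⟨h1i, hik, hne⟩ := Nat.find_spec noesc
  have hempty : ∀ j, 1 ≤ j → j < i0 → X ∩ Z j = ∅ := by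
    intro j h1 hj
    have hmn := Nat.find_min noesc hj
    rw [not_and_or, not_and_or] at hmn
    rcases hmn with h | h | h
    · omega
    · omega
    · exact Finset.not_nonempty_iff_eq_empty.1 h
  have hQ := main (i0 - 1) (by omega) (fun j h1 hj => hempty j h1 (by omega))
  have hstep := Qinv_step hQ (hmccAll (i0 - 1) (by omega)).1
  have hi0' : i0 - 1 + 1 = i0 := by omega
  rw [hi0'] at hstep
  refine ⟨i0, h1i, hik, hne, hempty, ?_⟩
  rintro u v huv ⟨hu, hv⟩
  exact mincut_not_iff hX huv (iff_of_true (hstep.1 hu) (hstep.1 hv))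
end

section
/- Let G be a finite undirected graph with disjoint vertex sets S and T, with drainage Z_1,...,Z_k, fixed Menger's paths, and mixed graph G_D. If B_h ⊊ Z_h is a closest dam, then its complement Z_h \ B_h is also a closest dam. -/
open SimpleGraph

variable {V : Type*}

/-- A family of `p` pairwise edge-disjoint `(S,T)`-paths (Menger's paths). -/
structure MengerFamily (G : SimpleGraph V) (S T : Set V) (p : ℕ) where
  a : Fin p → V
  b : Fin p → V
  ha : ∀ j, a j ∈ S
  hb : ∀ j, b j ∈ T
  walk : ∀ j, G.Walk (a j) (b j)
  isPath : ∀ j, (walk j).IsPath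
  edgeDisj : ∀ i j, i ≠ j → ∀ e, e ∈ (walk i).edges → e ∉ (walk j).edges

namespace MengerFamily

variable {G : SimpleGraph V} {S T : Set V} {p : ℕ}

/-- Arc of the mixed graph `G_D`: `(u,v)` is traversed in this direction by some
Menger path (oriented from `S` to `T`). -/
def Arc (M : MengerFamily G S T p) (u v : V) : Prop :=
  ∃ j, ∃ d ∈ (M.walk j).darts, d.toProd = (u, v)

/-- Edges lying on some Menger path. -/
def pathEdge (M : MengerFamily G S T p) (e : Sym2 V) : Prop :=
  ∃ j, e ∈ (M.walk j).edges

/-- One step of reachability in the mixed graph `G_D` deprived of the dam `B`: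
follow an arc in its direction, or an undirected edge in either direction. -/
def step (M : MengerFamily G S T p) (B : Finset (Sym2 V)) (u v : V) : Prop :=
  (M.Arc u v ∨ (G.Adj u v ∧ ¬ M.pathEdge s(u, v))) ∧ s(u, v) ∉ B

/-- Dry area `A*(B)`: the vertices not reachable from `S` in `G_D \ B`. -/
def dryArea (M : MengerFamily G S T p) (B : Finset (Sym2 V)) : Set V :=
  {v | ¬ ∃ s ∈ S, Relation.ReflTransGen (M.step B) s v}

/-- Signature `σ(B)`: the set of Menger paths meeting `B`. -/
def sig (M : MengerFamily G S T p) (B : Finset (Sym2 V)) : Set (Fin p) :=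
  {j | ∃ e ∈ B, e ∈ (M.walk j).edges}

/-- `S*(B)`: the tails of the arcs of `B`. -/
def Sstar (M : MengerFamily G S T p) (B : Finset (Sym2 V)) : Set V :=
  {u | ∃ v, M.Arc u v ∧ s(u, v) ∈ B}

/-- `T*(B)`: heads, outside the dry area, of edges leaving `S*(B) ∪ A*(B)`. -/
def Tstar (M : MengerFamily G S T p) (B : Finset (Sym2 V)) : Set V :=
  {v | v ∉ M.dryArea B ∧ ∃ u ∈ M.Sstar B ∪ M.dryArea B, G.Adj u v}

/-- `V*(B) = S*(B) ∪ A*(B) ∪ T*(B)`. -/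
def Vstar (M : MengerFamily G S T p) (B : Finset (Sym2 V)) : Set V :=
  M.Sstar B ∪ M.dryArea B ∪ M.Tstar B

/-- `E*(B)`: edges with both endpoints in `V*(B)`, at least one of them in `A*(B)`. -/
def Estar (M : MengerFamily G S T p) (B : Finset (Sym2 V)) : Set (Sym2 V) :=
  {e | ∃ u v, e = s(u, v) ∧ G.Adj u v ∧ u ∈ M.dryArea B ∧ v ∈ M.Vstar B}

/-- The graph `G*(B)` of the dry instance `D(I,B)`. -/
def Gstar (M : MengerFamily G S T p) (B : Finset (Sym2 V)) : SimpleGraph V where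
  Adj u v := G.Adj u v ∧ s(u, v) ∈ M.Estar B
  symm := ⟨fun _ _ ⟨h, he⟩ => ⟨h.symm, by rwa [Sym2.eq_swap]⟩⟩
  loopless := ⟨fun u ⟨h, _⟩ => G.ne_of_adj h rfl⟩

end MengerFamily

/-- A dam of the drainage `Z` (of length `k`): a nonempty subset of some
minimum drainage cut `Z i`. -/
def IsDam (Z : ℕ → Finset (Sym2 V)) (k i : ℕ) (B : Finset (Sym2 V)) : Prop :=
  1 ≤ i ∧ i ≤ k ∧ B ⊆ Z i ∧ B.Nonempty

/-- `B_h` (of level `h`) is closer than the dam `B_i` (of level `i`). -/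
def Closer {G : SimpleGraph V} {S T : Set V} {p : ℕ} (M : MengerFamily G S T p)
    (Z : ℕ → Finset (Sym2 V)) (h i : ℕ) (Bh Bi : Finset (Sym2 V)) : Prop :=
  h < i ∧ M.sig Bh = M.sig Bi ∧ M.Estar Bh ∩ ↑(Z i) = ↑Bi

/-- A closest dam: a dam such that no dam is closer than it. -/
def ClosestDam {G : SimpleGraph V} {S T : Set V} {p : ℕ} (M : MengerFamily G S T p)
    (Z : ℕ → Finset (Sym2 V)) (k i : ℕ) (B : Finset (Sym2 V)) : Prop :=
  IsDam Z k i B ∧ ¬ ∃ h Bh, IsDam Z k h Bh ∧ Closer M Z h i Bh B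
section DamAux

open Relation SimpleGraph.Walk

variable [Fintype V] [DecidableEq V]
variable {G : SimpleGraph V} {S T : Set V} {p k : ℕ} {Z : ℕ → Finset (Sym2 V)}
variable {X : Finset (Sym2 V)} {u v s t : V} {i : ℕ}

lemma deprive_adj {U : Set V} {a c : V} (h : (deprive G U).Adj a c) :
    G.Adj a c ∧ a ∉ U ∧ c ∉ U := h

lemma mem_rside (hs : s ∈ S) : s ∈ Rside G X S :=
  ⟨s, hs, SimpleGraph.Reachable.refl s⟩

lemma rside_closure (hu : u ∈ Rside G X S) (hadj : G.Adj u v) (he : s(u, v) ∉ X) :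
    v ∈ Rside G X S := by
  obtain ⟨s, hs, hr⟩ := hu
  refine ⟨s, hs, hr.trans (SimpleGraph.Adj.reachable ?_)⟩
  rw [SimpleGraph.deleteEdges_adj]
  exact ⟨hadj, by simpa using he⟩

lemma boundary_mem (hu : u ∈ Rside G X S) (hv : v ∉ Rside G X S) (hadj : G.Adj u v) :
    s(u, v) ∈ X := by
  by_contra hn
  exact hv (rside_closure hu hadj hn)

lemma card_Z (hZ : IsDrainage G S T p k Z) (hi : 1 ≤ i) (hik : i ≤ k) : (Z i).card = p := by
  rcases Nat.exists_eq_add_of_le hi with ⟨m, rfl⟩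
  cases m with
  | zero => exact hZ.2.2.1
  | succ n =>
    have he : 1 + (n + 1) = (1 + n) + 1 := by omega
    rw [he]
    exact (hZ.2.2.2.1 (1 + n) (by omega) (by omega)).2

lemma minEdgeCut_mem_edgeSet {G' : SimpleGraph V} {S' T' : Set V} {X : Finset (Sym2 V)}
    (h : MinEdgeCut G' S' T' X) : ∀ e ∈ X, e ∈ G'.edgeSet := by
  intro e he
  by_contra hne
  have hdel : G'.deleteEdges ↑(X.erase e) = G'.deleteEdges ↑X := by
    ext u v
    simp only [SimpleGraph.deleteEdges_adj]
    constructor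
    · rintro ⟨ha, hm⟩
      refine ⟨ha, fun hx => hm ?_⟩
      have hnee : s(u, v) ≠ e := fun h' => hne (h' ▸ ((SimpleGraph.mem_edgeSet _).mpr ha))
      exact Finset.mem_coe.mpr (Finset.mem_erase.mpr ⟨hnee, Finset.mem_coe.mp hx⟩)
    · rintro ⟨ha, hm⟩
      exact ⟨ha, fun hx => hm (Finset.mem_coe.mpr
        (Finset.mem_of_mem_erase (Finset.mem_coe.mp hx)))⟩
  have hcut : EdgeCut G' S' T' (X.erase e) := by
    intro s hs t ht hr
    exact h.1 s hs t ht (by rwa [hdel] at hr)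
  have hle := h.2 _ hcut
  rw [Finset.card_erase_of_mem he] at hle
  have hpos : 1 ≤ X.card := Finset.card_pos.mpr ⟨e, he⟩
  omega

/-- If a walk in `G \ X` goes from inside `U := R(Z_i,S)`-like closed set to outside,
one can find a next-source from which the endpoint is reachable in the deprived graph. -/
lemma walk_cross {U : Set V} {Zi X : Finset (Sym2 V)}
    (hUcl : ∀ ⦃a c : V⦄, a ∈ U → G.Adj a c → s(a, c) ∉ Zi → c ∈ U) :
    ∀ {a b : V} (_w : (G.deleteEdges ↑X).Walk a b), b ∉ U →
      ((a ∈ U → ∃ v, (v ∉ U ∧ ∃ u, s(u, v) ∈ Zi) ∧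
          ((deprive G U).deleteEdges ↑X).Reachable v b) ∧
       (a ∉ U → (((deprive G U).deleteEdges ↑X).Reachable a b ∨
          ∃ v, (v ∉ U ∧ ∃ u, s(u, v) ∈ Zi) ∧
            ((deprive G U).deleteEdges ↑X).Reachable v b))) := by
  intro a b w
  induction w with
  | nil =>
    intro hb
    exact ⟨fun ha => absurd ha hb, fun _ => Or.inl (SimpleGraph.Reachable.refl _)⟩
  | @cons a c b hadj0 q ih =>
    intro hb
    have hadj : G.Adj a c ∧ s(a, c) ∉ X := by
      have := hadj0
      rw [SimpleGraph.deleteEdges_adj] at this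
      exact ⟨this.1, by simpa using this.2⟩
    have IH := ih hb
    constructor
    · intro haU
      by_cases hcU : c ∈ U
      · exact IH.1 hcU
      · have hz : s(a, c) ∈ Zi := by
          by_contra hzn
          exact hcU (hUcl haU hadj.1 hzn)
        rcases IH.2 hcU with hr | ⟨v, hv', hr⟩
        · exact ⟨c, ⟨hcU, a, hz⟩, hr⟩
        · exact ⟨v, hv', hr⟩
    · intro haU
      by_cases hcU : c ∈ U
      · exact Or.inr (IH.1 hcU)
      · have hstep : ((deprive G U).deleteEdges ↑X).Adj a c := by
          rw [SimpleGraph.deleteEdges_adj]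
          exact ⟨(⟨hadj.1, haU, hcU⟩ : G.Adj a c ∧ a ∉ U ∧ c ∉ U), by simpa using hadj.2⟩
        rcases IH.2 hcU with hr | ⟨v, hv', hr⟩
        · exact Or.inl (hstep.reachable.trans hr)
        · exact Or.inr ⟨v, hv', hr⟩

lemma T_not_rside (hZ : IsDrainage G S T p k Z) :
    ∀ i, 1 ≤ i → i ≤ k → ∀ t ∈ T, t ∉ Rside G (Z i) S := by
  intro i hi
  induction i, hi using Nat.le_induction with
  | base =>
    intro _ t ht hmem
    obtain ⟨s, hs, hr⟩ := hmem
    exact hZ.2.1.1.1 s hs t ht hr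
  | succ n hn ih =>
    intro hk t ht hmem
    obtain ⟨s, hs, hr⟩ := hmem
    obtain ⟨w⟩ := hr
    have hcl : ∀ ⦃a c : V⦄, a ∈ Rside G (Z n) S → G.Adj a c → s(a, c) ∉ Z n →
        c ∈ Rside G (Z n) S := fun a c ha h1 h2 => rside_closure ha h1 h2
    obtain ⟨v, hv, hr'⟩ := (walk_cross hcl w (ih (by omega) t ht)).1 (mem_rside hs)
    exact (hZ.2.2.2.1 n hn (by omega)).1.1.1 v hv t ht hr'

lemma rside_mono_succ (hZ : IsDrainage G S T p k Z) (hi : 1 ≤ i) (hik : i < k) :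
    Rside G (Z i) S ⊆ Rside G (Z (i + 1)) S := by
  have key : ∀ {a b : V} (_w : (G.deleteEdges ↑(Z i)).Walk a b),
      a ∈ Rside G (Z i) S → a ∈ Rside G (Z (i + 1)) S → b ∈ Rside G (Z (i + 1)) S := by
    intro a b w
    induction w with
    | nil => exact fun _ h => h
    | @cons a c b hadj0 q ih =>
      intro ha ha'
      have hadj : G.Adj a c ∧ s(a, c) ∉ Z i := by
        have := hadj0
        rw [SimpleGraph.deleteEdges_adj] at this
        exact ⟨this.1, by simpa using this.2⟩
      have hc : c ∈ Rside G (Z i) S := rside_closure ha hadj.1 hadj.2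
      have hnot : s(a, c) ∉ Z (i + 1) := by
        intro hmem
        have hes := minEdgeCut_mem_edgeSet (hZ.2.2.2.1 i hi hik).1.1 _ hmem
        exact (deprive_adj ((SimpleGraph.mem_edgeSet _).mp hes)).2.1 ha
      exact ih hc (rside_closure ha' hadj.1 hnot)
  intro v hv
  obtain ⟨s, hs, hr⟩ := hv
  obtain ⟨w⟩ := hr
  exact key w (mem_rside hs) (mem_rside hs)

lemma rside_mono (hZ : IsDrainage G S T p k Z) {g : ℕ} (hg : 1 ≤ g) :
    ∀ h', g ≤ h' → h' ≤ k → Rside G (Z g) S ⊆ Rside G (Z h') S := by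
  refine Nat.le_induction (fun _ => subset_rfl) ?_
  intro n hgn ih hk
  exact (ih (by omega)).trans (rside_mono_succ hZ (by omega) (by omega))

lemma walk_first_exit {U : Set V} :
    ∀ {a b : V} (w : G.Walk a b), a ∈ U → b ∉ U →
      ∃ d ∈ w.darts, d.fst ∈ U ∧ d.snd ∉ U := by
  intro a b w
  induction w with
  | nil => exact fun ha hb => absurd ha hb
  | @cons a c b hadj q ih =>
    intro ha hb
    by_cases hc : c ∈ U
    · obtain ⟨d, hd, h1, h2⟩ := ih hc hb
      exact ⟨d, by simp [SimpleGraph.Walk.darts_cons, hd], h1, h2⟩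
    · exact ⟨⟨(a, c), hadj⟩, by simp [SimpleGraph.Walk.darts_cons], ha, hc⟩

lemma walk_first_enter {U : Set V} :
    ∀ {a b : V} (w : G.Walk a b), a ∉ U → ∀ v ∈ w.support, v ∈ U →
      ∃ d ∈ w.darts, d.fst ∉ U ∧ d.snd ∈ U := by
  intro a b w
  induction w with
  | nil =>
    intro ha v hv hvU
    rw [SimpleGraph.Walk.support_nil, List.mem_singleton] at hv
    exact absurd hvU (hv ▸ ha)
  | @cons a c b hadj q ih =>
    intro ha v hv hvU
    by_cases hc : c ∈ U
    · exact ⟨⟨(a, c), hadj⟩, by simp [SimpleGraph.Walk.darts_cons], ha, hc⟩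
    · rw [SimpleGraph.Walk.support_cons, List.mem_cons] at hv
      rcases hv with rfl | hv
      · exact absurd hvU ha
      · obtain ⟨d, hd, h1, h2⟩ := ih hc v hv hvU
        exact ⟨d, by simp [SimpleGraph.Walk.darts_cons, hd], h1, h2⟩

lemma dart_edge_eq (d : G.Dart) : d.edge = s(d.fst, d.snd) := rfl

lemma arc_of_dart (M : MengerFamily G S T p) {j : Fin p} {d : G.Dart}
    (hd : d ∈ (M.walk j).darts) : M.Arc d.fst d.snd :=
  ⟨j, d, hd, rfl⟩

lemma arc_adj {M : MengerFamily G S T p} (h : M.Arc u v) : G.Adj u v := by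
  obtain ⟨j, d, _hd, hp⟩ := h
  have := d.adj
  rwa [show d.fst = u from by rw [hp], show d.snd = v from by rw [hp]] at this

lemma step_or_adj {M : MengerFamily G S T p}
    (hor : M.Arc u v ∨ (G.Adj u v ∧ ¬ M.pathEdge s(u, v))) : G.Adj u v := by
  rcases hor with h | h
  · exact arc_adj h
  · exact h.1

/-- Walking along arcs that avoid `X` yields `step`-reachability of every support vertex. -/
lemma walk_reach_from (M : MengerFamily G S T p) {X : Finset (Sym2 V)} :
    ∀ {x y : V} (w : G.Walk x y), (∀ d ∈ w.darts, M.Arc d.fst d.snd) →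
      (∀ e ∈ w.edges, e ∉ X) → ∀ v ∈ w.support, ReflTransGen (M.step X) x v := by
  intro x y w
  induction w with
  | nil =>
    intro _ _ v hv
    rw [SimpleGraph.Walk.support_nil, List.mem_singleton] at hv
    exact hv ▸ ReflTransGen.refl
  | @cons a c b hadj q ih =>
    intro harc hX v hv
    rw [SimpleGraph.Walk.support_cons, List.mem_cons] at hv
    rcases hv with rfl | hv
    · exact ReflTransGen.refl
    · have hstep : M.step X a c := by
        refine ⟨Or.inl (harc ⟨(a, c), hadj⟩ (by simp [SimpleGraph.Walk.darts_cons])), ?_⟩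
        exact hX s(a, c) (by simp [SimpleGraph.Walk.edges_cons])
      have hrest := ih (fun d hd => harc d (by simp [SimpleGraph.Walk.darts_cons, hd]))
        (fun e he => hX e (by simp [SimpleGraph.Walk.edges_cons, he])) v hv
      exact hrest.head hstep

lemma dart_unique {w : G.Walk u v} (hnodup : w.edges.Nodup) {d d' : G.Dart}
    (hd : d ∈ w.darts) (hd' : d' ∈ w.darts) (he : d.edge = d'.edge) : d = d' := by
  have h2 : (w.darts.map SimpleGraph.Dart.edge).Nodup := hnodup
  exact List.inj_on_of_nodup_map h2 hd hd' he

lemma edge_mem_of_dart_mem {w : G.Walk u v} {d : G.Dart} (hd : d ∈ w.darts) :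
    d.edge ∈ w.edges :=
  List.mem_map_of_mem hd

/-- Structure of the cut `Z i`: a bijective family of crossing darts, one per Menger path. -/
lemma level_structure (hZ : IsDrainage G S T p k Z) (M : MengerFamily G S T p)
    (hi : 1 ≤ i) (hik : i ≤ k) :
    ∃ (z : Fin p → Sym2 V) (d : Fin p → G.Dart),
      (∀ j, d j ∈ (M.walk j).darts) ∧
      (∀ j, (d j).edge = z j) ∧
      (∀ j, (d j).fst ∈ Rside G (Z i) S) ∧
      (∀ j, (d j).snd ∉ Rside G (Z i) S) ∧
      (∀ j, z j ∈ Z i) ∧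
      (∀ e ∈ Z i, ∃ j, z j = e) ∧
      (∀ j e, e ∈ (M.walk j).edges → e ∈ Z i → e = z j) ∧
      (∀ j, ∀ d' ∈ (M.walk j).darts, d'.edge = z j → d' = d j) := by
  have hex : ∀ j : Fin p, ∃ d ∈ (M.walk j).darts,
      d.fst ∈ Rside G (Z i) S ∧ d.snd ∉ Rside G (Z i) S := fun j =>
    walk_first_exit (M.walk j) (mem_rside (M.ha j)) (T_not_rside hZ i hi hik _ (M.hb j))
  choose d hd hdf hds using hex
  have hmemE : ∀ j, (d j).edge ∈ (M.walk j).edges := fun j => edge_mem_of_dart_mem (hd j)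
  have hzZ : ∀ j, (d j).edge ∈ Z i := fun j => by
    rw [dart_edge_eq]
    exact boundary_mem (hdf j) (hds j) (d j).adj
  have hinj : Function.Injective (fun j => (d j).edge) := by
    intro a b hab
    have hab' : (d a).edge = (d b).edge := hab
    by_contra hne
    exact M.edgeDisj a b hne _ (hmemE a) (hab' ▸ hmemE b)
  have himg : Finset.image (fun j => (d j).edge) Finset.univ ⊆ Z i := by
    intro e he
    obtain ⟨j, _, rfl⟩ := Finset.mem_image.mp he
    exact hzZ j
  have hcard : (Finset.image (fun j => (d j).edge) Finset.univ).card = p := by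
    rw [Finset.card_image_of_injective _ hinj, Finset.card_univ, Fintype.card_fin]
  have heq : Finset.image (fun j => (d j).edge) Finset.univ = Z i :=
    Finset.eq_of_subset_of_card_le himg (by rw [hcard, card_Z hZ hi hik])
  refine ⟨fun j => (d j).edge, d, hd, fun j => rfl, hdf, hds, hzZ, ?_, ?_, ?_⟩
  · intro e he
    rw [← heq] at he
    obtain ⟨j, _, hj⟩ := Finset.mem_image.mp he
    exact ⟨j, hj⟩
  · intro j e hee heZ
    rw [← heq] at heZ
    obtain ⟨j', _, hj'⟩ := Finset.mem_image.mp heZ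
    by_cases hjj : j' = j
    · rw [← hj', hjj]
    · exact absurd hee (M.edgeDisj j' j hjj _ (hj' ▸ hmemE j'))
  · intro j d' hd' hde
    exact dart_unique (M.isPath j).isTrail.edges_nodup hd' (hd j) hde
/-- One free (non-path) undirected step of `G_D`. -/
def FreeStep (M : MengerFamily G S T p) (u v : V) : Prop :=
  G.Adj u v ∧ ¬ M.pathEdge s(u, v)

/-- A `G_D`-step staying outside the region `U`. -/
def OutStep (M : MengerFamily G S T p) (U : Set V) (u v : V) : Prop :=
  (M.Arc u v ∨ FreeStep M u v) ∧ u ∉ U ∧ v ∉ U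

end DamAux

/-- If `B_h ⊊ Z_h` is a closest dam, then its complement
`Z_h \ B_h` is also a closest dam. -/
theorem complement_of_closest_dam_closest
    [Fintype V] [DecidableEq V] (G : SimpleGraph V) (S T : Set V)
    (hST : Disjoint S T) (hS : S.Nonempty) (hT : T.Nonempty)
    (p k : ℕ) (Z : ℕ → Finset (Sym2 V))
    (hmin : ∃ X0 : Finset (Sym2 V), MinEdgeCut G S T X0 ∧ X0.card = p)
    (hZ : IsDrainage G S T p k Z) (M : MengerFamily G S T p)
    (h : ℕ) (B : Finset (Sym2 V)) (hproper : B ⊂ Z h)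
    (hclosest : ClosestDam M Z k h B) :
    ClosestDam M Z k h (Z h \ B) := by
  classical
  obtain ⟨⟨hh1, hhk, hBZ, hBne⟩, hnoCloser⟩ := hclosest
  refine ⟨⟨hh1, hhk, Finset.sdiff_subset, ?_⟩, ?_⟩
  · obtain ⟨x, hxZ, hxB⟩ := Finset.exists_of_ssubset hproper
    exact ⟨x, Finset.mem_sdiff.mpr ⟨hxZ, hxB⟩⟩
  rintro ⟨g, C, hdamC, hcloserC⟩
  obtain ⟨hg1, hgkk, hCZ, hCne⟩ := hdamC
  obtain ⟨hgh, hsigC_eq, hEstarC⟩ := hcloserC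
  have hgk : g ≤ k := le_trans (le_of_lt hgh) hhk
  obtain ⟨zg, dg, hdg_mem, hdg_edge, hdg_fst, hdg_snd, hzg_mem, hzg_surj, hzg_uniq, hdg_uniq⟩ :=
    level_structure hZ M hg1 hgk
  obtain ⟨zh, dh, hdh_mem, hdh_edge, hdh_fst, hdh_snd, hzh_mem, hzh_surj, hzh_uniq, hdh_uniq⟩ :=
    level_structure hZ M hh1 hhk
  have hzg_edges : ∀ j, zg j ∈ (M.walk j).edges := fun j =>
    (hdg_edge j) ▸ edge_mem_of_dart_mem (hdg_mem j)
  have hzh_edges : ∀ j, zh j ∈ (M.walk j).edges := fun j =>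
    (hdh_edge j) ▸ edge_mem_of_dart_mem (hdh_mem j)
  have hZg_path : ∀ e ∈ Z g, M.pathEdge e := by
    intro e he
    obtain ⟨q, hq⟩ := hzg_surj e he
    exact ⟨q, hq ▸ hzg_edges q⟩
  -- endpoints of `Z h` edges are outside `R(Z g, S)`
  have hzh_dep : ∀ e ∈ Z h, e ∈ (deprive G (Rside G (Z (h - 1)) S)).edgeSet := by
    have hz := minEdgeCut_mem_edgeSet (hZ.2.2.2.1 (h - 1) (by omega) (by omega)).1.1
    have he : h - 1 + 1 = h := by omega
    rw [he] at hz
    exact hz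
  have hmono_g_h1 : Rside G (Z g) S ⊆ Rside G (Z (h - 1)) S :=
    rside_mono hZ hg1 (h - 1) (by omega) (by omega)
  have hfst_not_Wg : ∀ j, (dh j).fst ∉ Rside G (Z g) S := by
    intro j hc
    have he := hzh_dep (dh j).edge (by rw [hdh_edge j]; exact hzh_mem j)
    rw [dart_edge_eq] at he
    exact (deprive_adj ((SimpleGraph.mem_edgeSet _).mp he)).2.1 (hmono_g_h1 hc)
  have hsnd_not_Wg : ∀ j, (dh j).snd ∉ Rside G (Z g) S := by
    intro j hc
    have he := hzh_dep (dh j).edge (by rw [hdh_edge j]; exact hzh_mem j)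
    rw [dart_edge_eq] at he
    exact (deprive_adj ((SimpleGraph.mem_edgeSet _).mp he)).2.2 (hmono_g_h1 hc)
  -- signature characterizations
  have hsig_g : ∀ (X : Finset (Sym2 V)), X ⊆ Z g → ∀ j, (j ∈ M.sig X ↔ zg j ∈ X) := by
    intro X hXZ j
    constructor
    · rintro ⟨e, heX, hee⟩
      exact (hzg_uniq j e hee (hXZ heX)) ▸ heX
    · intro hx
      exact ⟨zg j, hx, hzg_edges j⟩
  have hsig_h : ∀ (X : Finset (Sym2 V)), X ⊆ Z h → ∀ j, (j ∈ M.sig X ↔ zh j ∈ X) := by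
    intro X hXZ j
    constructor
    · rintro ⟨e, heX, hee⟩
      exact (hzh_uniq j e hee (hXZ heX)) ▸ heX
    · intro hx
      exact ⟨zh j, hx, hzh_edges j⟩
  have hkey : ∀ j, (zg j ∈ C ↔ zh j ∉ B) := by
    intro j
    rw [← hsig_g C hCZ j, hsigC_eq, hsig_h (Z h \ B) Finset.sdiff_subset j, Finset.mem_sdiff]
    exact ⟨fun h' => h'.2, fun h' => ⟨hzh_mem j, h'⟩⟩
  have hDmem : ∀ j, (zg j ∈ Z g \ C ↔ zh j ∈ B) := by
    intro j
    rw [Finset.mem_sdiff]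
    constructor
    · rintro ⟨_, hnc⟩
      by_contra hb
      exact hnc ((hkey j).mpr hb)
    · intro hb
      exact ⟨hzg_mem j, fun hc => (hkey j).mp hc hb⟩
  -- full-path wetness
  have hwet : ∀ (X : Finset (Sym2 V)), X ⊆ Z g → ∀ j, zg j ∉ X →
      ∀ v ∈ (M.walk j).support, Relation.ReflTransGen (M.step X) (M.a j) v := by
    intro X hXZ j hz v hv
    refine walk_reach_from M (M.walk j) (fun d hd => arc_of_dart M hd) ?_ v hv
    intro e hee heX
    exact hz ((hzg_uniq j e hee (hXZ heX)) ▸ heX)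
  have hu_supp : ∀ j, (dh j).fst ∈ (M.walk j).support :=
    fun j => SimpleGraph.Walk.dart_fst_mem_support_of_mem_darts _ (hdh_mem j)
  have hv_supp : ∀ j, (dh j).snd ∈ (M.walk j).support :=
    fun j => SimpleGraph.Walk.dart_snd_mem_support_of_mem_darts _ (hdh_mem j)
  have hzh_as_s : ∀ j, zh j = s((dh j).fst, (dh j).snd) := by
    intro j
    rw [← hdh_edge j]
    rfl
  -- `E*` membership helpers
  have hEstar_mem : ∀ (X : Finset (Sym2 V)) j,
      ((dh j).fst ∈ M.dryArea X ∨ (dh j).snd ∈ M.dryArea X) → zh j ∈ M.Estar X := by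
    intro X j hdry
    rcases hdry with hu | hv
    · by_cases hv' : (dh j).snd ∈ M.dryArea X
      · exact ⟨(dh j).fst, (dh j).snd, hzh_as_s j, (dh j).adj, hu, Or.inl (Or.inr hv')⟩
      · exact ⟨(dh j).fst, (dh j).snd, hzh_as_s j, (dh j).adj, hu,
          Or.inr ⟨hv', (dh j).fst, Or.inr hu, (dh j).adj⟩⟩
    · by_cases hu' : (dh j).fst ∈ M.dryArea X
      · exact ⟨(dh j).fst, (dh j).snd, hzh_as_s j, (dh j).adj, hu', Or.inl (Or.inr hv)⟩
      · refine ⟨(dh j).snd, (dh j).fst, ?_, (dh j).adj.symm, hv,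
          Or.inr ⟨hu', (dh j).snd, Or.inr hv, (dh j).adj.symm⟩⟩
        rw [hzh_as_s j, Sym2.eq_swap]
  have hEstar_not : ∀ (X : Finset (Sym2 V)) j,
      (∃ s ∈ S, Relation.ReflTransGen (M.step X) s (dh j).fst) →
      (∃ s ∈ S, Relation.ReflTransGen (M.step X) s (dh j).snd) → zh j ∉ M.Estar X := by
    intro X j hu hv hE
    obtain ⟨x, y, hxy, _hadj, hxdry, _⟩ := hE
    have hs : s(x, y) = s((dh j).fst, (dh j).snd) := by
      rw [← hxy]
      exact hzh_as_s j
    rcases Sym2.eq_iff.mp hs with ⟨rfl, rfl⟩ | ⟨rfl, rfl⟩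
    · exact hxdry hu
    · exact hxdry hv
  -- main dichotomy
  by_cases hW1 : ∀ j, zh j ∈ B →
      ((dh j).fst ∈ M.dryArea (Z g \ C) ∨ (dh j).snd ∈ M.dryArea (Z g \ C))
  · -- the complementary dam `Z g \ C` is closer than `B`: contradiction with closestness
    refine hnoCloser ⟨g, Z g \ C, ⟨hg1, by omega, Finset.sdiff_subset, ?_⟩, hgh, ?_, ?_⟩
    · obtain ⟨e, heB⟩ := hBne
      obtain ⟨j, hj⟩ := hzh_surj e (hBZ heB)
      exact ⟨zg j, (hDmem j).mpr (hj ▸ heB)⟩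
    · ext j
      rw [hsig_g _ Finset.sdiff_subset j, hsig_h B hBZ j]
      exact hDmem j
    · ext e
      constructor
      · rintro ⟨heE, heZ⟩
        have heZ' : e ∈ Z h := heZ
        obtain ⟨j, hj⟩ := hzh_surj e heZ'
        by_cases hjB : zh j ∈ B
        · exact Finset.mem_coe.mpr (hj ▸ hjB)
        · exfalso
          have hzgj : zg j ∉ Z g \ C := fun hc => hjB ((hDmem j).mp hc)
          refine hEstar_not (Z g \ C) j
            ⟨M.a j, M.ha j, hwet _ Finset.sdiff_subset j hzgj _ (hu_supp j)⟩
            ⟨M.a j, M.ha j, hwet _ Finset.sdiff_subset j hzgj _ (hv_supp j)⟩ ?_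
          rw [hj]
          exact heE
      · intro heB
        have heB' : e ∈ B := heB
        obtain ⟨j, hj⟩ := hzh_surj e (hBZ heB')
        refine ⟨?_, Finset.mem_coe.mpr (hBZ heB')⟩
        rw [← hj]
        exact hEstar_mem _ j (hW1 j (by rw [hj]; exact heB'))
  · -- otherwise some `j₀ ∈ σ(B)` is wet under `Z g \ C`: contradiction with `E*(C) ∩ Z h`
    push_neg at hW1
    obtain ⟨j₀, hj₀B, hj₀u, _hj₀v⟩ := hW1
    have hwet_u : ∃ s ∈ S, Relation.ReflTransGen (M.step (Z g \ C)) s (dh j₀).fst := by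
      by_contra hc
      exact hj₀u hc
    obtain ⟨s0, hs0, hchain0⟩ := hwet_u
    -- no step can enter `R(Z i, S)` from outside
    have hNoEnterG : ∀ a c : V, (M.Arc a c ∨ FreeStep M a c) →
        a ∉ Rside G (Z g) S → c ∈ Rside G (Z g) S → False := by
      intro a c hor ha hc
      have hadj : G.Adj a c := step_or_adj hor
      have hz : s(a, c) ∈ Z g := by
        have hb := boundary_mem hc ha hadj.symm
        rwa [Sym2.eq_swap] at hb
      obtain ⟨q, hq⟩ := hzg_surj _ hz
      rcases hor with harc | hfree
      · obtain ⟨q', d', hd', hp⟩ := harc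
        have hde : d'.edge = zg q := by
          rw [dart_edge_eq, show d'.fst = a from by rw [hp],
            show d'.snd = c from by rw [hp], hq]
        have hq'q : q' = q := by
          by_contra hne
          exact M.edgeDisj q' q hne _ (edge_mem_of_dart_mem hd') (hde ▸ hzg_edges q)
        have hdd : d' = dg q := hdg_uniq q d' (hq'q ▸ hd') hde
        refine ha ?_
        have hfa : d'.fst = a := by rw [hp]
        rw [← hfa, hdd]
        exact hdg_fst q
      · exact hfree.2 ⟨q, hq ▸ hzg_edges q⟩
    have hNoEnterH : ∀ a c : V, (M.Arc a c ∨ FreeStep M a c) →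
        a ∉ Rside G (Z h) S → c ∈ Rside G (Z h) S → False := by
      intro a c hor ha hc
      have hadj : G.Adj a c := step_or_adj hor
      have hz : s(a, c) ∈ Z h := by
        have hb := boundary_mem hc ha hadj.symm
        rwa [Sym2.eq_swap] at hb
      obtain ⟨q, hq⟩ := hzh_surj _ hz
      rcases hor with harc | hfree
      · obtain ⟨q', d', hd', hp⟩ := harc
        have hde : d'.edge = zh q := by
          rw [dart_edge_eq, show d'.fst = a from by rw [hp],
            show d'.snd = c from by rw [hp], hq]
        have hq'q : q' = q := by
          by_contra hne
          exact M.edgeDisj q' q hne _ (edge_mem_of_dart_mem hd') (hde ▸ hzh_edges q)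
        have hdd : d' = dh q := hdh_uniq q d' (hq'q ▸ hd') hde
        refine ha ?_
        have hfa : d'.fst = a := by rw [hp]
        rw [← hfa, hdd]
        exact hdh_fst q
      · exact hfree.2 ⟨q, hq ▸ hzh_edges q⟩
    -- the violation construction
    have hVIOL : ∀ (av bv : Fin p) (wa wb : V), zh av ∉ B → zh bv ∈ B →
        wa ∈ (M.walk av).support → wa ∉ Rside G (Z g) S → wa ∈ Rside G (Z h) S →
        wb ∈ (M.walk bv).support →
        Relation.ReflTransGen (FreeStep M) wb wa → False := by
      intro av bv wa wb haB hbB hwa_supp hwa_g hwa_h hwb_supp hchainF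
      have hzgb_not : zg bv ∉ C := fun hc => (hkey bv).mp hc hbB
      have h1 : Relation.ReflTransGen (M.step C) (M.a bv) wb :=
        hwet C hCZ bv hzgb_not wb hwb_supp
      have h2 : Relation.ReflTransGen (M.step C) wb wa := by
        refine Relation.ReflTransGen.mono ?_ _ _ hchainF
        intro x y hxy
        exact ⟨Or.inr ⟨hxy.1, hxy.2⟩, fun hm => hxy.2 (hZg_path _ (hCZ hm))⟩
      set σ := (M.walk av).dropUntil wa hwa_supp with hσdef
      have hσ_darts : ∀ d ∈ σ.darts, d ∈ (M.walk av).darts := fun d hd =>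
        SimpleGraph.Walk.darts_dropUntil_subset _ _ hd
      have hσ_edges : ∀ e ∈ σ.edges, e ∈ (M.walk av).edges := fun e he =>
        SimpleGraph.Walk.edges_dropUntil_subset _ _ he
      have hzga_not : zg av ∉ σ.edges := by
        intro hmem
        obtain ⟨d', hd', hde⟩ := List.mem_map.mp hmem
        have hdd : d' = dg av := hdg_uniq av d' (hσ_darts d' hd') hde
        have hfstσ : (dg av).fst ∈ σ.support := by
          rw [← hdd]
          exact SimpleGraph.Walk.dart_fst_mem_support_of_mem_darts σ hd'
        obtain ⟨d'', hd'', h1'', h2''⟩ := walk_first_enter σ hwa_g (dg av).fst hfstσ (hdg_fst av)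
        have hz'' : d''.edge ∈ Z g := by
          rw [dart_edge_eq]
          have hb := boundary_mem h2'' h1'' d''.adj.symm
          rwa [Sym2.eq_swap] at hb
        have hde'' : d''.edge = zg av :=
          hzg_uniq av _ (hσ_edges _ (edge_mem_of_dart_mem hd'')) hz''
        have hdd'' : d'' = dg av := hdg_uniq av d'' (hσ_darts d'' hd'') hde''
        refine h1'' ?_
        rw [hdd'']
        exact hdg_fst av
      have hσ_avoidC : ∀ e ∈ σ.edges, e ∉ C := by
        intro e hee heC
        have heq : e = zg av := hzg_uniq av e (hσ_edges e hee) (hCZ heC)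
        exact hzga_not (heq ▸ hee)
      have hend : M.b av ∉ Rside G (Z h) S := T_not_rside hZ h hh1 hhk _ (M.hb av)
      obtain ⟨dx, hdxσ, hdxf, hdxs⟩ := walk_first_exit σ hwa_h hend
      have hdxz : dx.edge ∈ Z h := by
        rw [dart_edge_eq]
        exact boundary_mem hdxf hdxs dx.adj
      have hdxe : dx.edge = zh av :=
        hzh_uniq av _ (hσ_edges _ (edge_mem_of_dart_mem hdxσ)) hdxz
      have hdxd : dx = dh av := hdh_uniq av dx (hσ_darts dx hdxσ) hdxe
      have hu_in_σ : (dh av).fst ∈ σ.support := by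
        rw [← hdxd]
        exact SimpleGraph.Walk.dart_fst_mem_support_of_mem_darts σ hdxσ
      have hv_in_σ : (dh av).snd ∈ σ.support := by
        rw [← hdxd]
        exact SimpleGraph.Walk.dart_snd_mem_support_of_mem_darts σ hdxσ
      have h3u : Relation.ReflTransGen (M.step C) wa (dh av).fst :=
        walk_reach_from M σ (fun d hd => arc_of_dart M (hσ_darts d hd)) hσ_avoidC _ hu_in_σ
      have h3v : Relation.ReflTransGen (M.step C) wa (dh av).snd :=
        walk_reach_from M σ (fun d hd => arc_of_dart M (hσ_darts d hd)) hσ_avoidC _ hv_in_σ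
      have hzhaE : zh av ∈ M.Estar C := by
        have hm : zh av ∈ Z h \ B := Finset.mem_sdiff.mpr ⟨hzh_mem av, haB⟩
        have hm2 : (zh av : Sym2 V) ∈ (↑(Z h \ B) : Set (Sym2 V)) := Finset.mem_coe.mpr hm
        rw [← hEstarC] at hm2
        exact hm2.1
      exact hEstar_not C av
        ⟨M.a bv, M.ha bv, (h1.trans h2).trans h3u⟩
        ⟨M.a bv, M.ha bv, (h1.trans h2).trans h3v⟩ hzhaE
    -- chains outside `R(Z g,S)` cannot enter `R(Z h, S)`
    have hNoEnterChainH : ∀ c : V,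
        Relation.ReflTransGen (OutStep M (Rside G (Z g) S)) c (dh j₀).fst →
        c ∉ Rside G (Z h) S → False := by
      intro c hc
      induction hc using Relation.ReflTransGen.head_induction_on with
      | refl => exact fun hn => hn (hdh_fst j₀)
      | @head x c hstep hrest ih =>
        intro hxW
        by_cases hcW : c ∈ Rside G (Z h) S
        · exact hNoEnterH x c hstep.1 hxW hcW
        · exact ih hcW
    -- the key induction along an outside chain
    have hsymF : Symmetric (FreeStep M) := by
      intro u' v' huv
      exact ⟨huv.1.symm, fun hp => huv.2 (by rwa [Sym2.eq_swap] at hp)⟩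
    have hKEY : ∀ x : V, Relation.ReflTransGen (OutStep M (Rside G (Z g) S)) x (dh j₀).fst →
        (∃ n : Fin p, zh n ∉ B ∧ ∃ w, (w ∈ (M.walk n).support ∧ w ∉ Rside G (Z g) S ∧
          w ∈ Rside G (Z h) S) ∧ Relation.ReflTransGen (FreeStep M) w x) → False := by
      intro x hx
      induction hx using Relation.ReflTransGen.head_induction_on with
      | refl =>
        rintro ⟨n, hnB, w, ⟨hw1, hw2, hw3⟩, hwchain⟩
        exact hVIOL n j₀ w (dh j₀).fst hnB hj₀B hw1 hw2 hw3 (hu_supp j₀)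
          ((@Relation.ReflTransGen.stdSymm _ _ ⟨fun _ _ h => hsymF h⟩).symm _ _ hwchain)
      | @head x c hstep hrest ih =>
        rintro ⟨n, hnB, w, hwseg, hwchain⟩
        obtain ⟨hor, hxWg, hcWg⟩ := hstep
        rcases hor with harc | hfree
        · by_cases hcWh : c ∈ Rside G (Z h) S
          · obtain ⟨q', d', hd', hp⟩ := harc
            by_cases hq'B : zh q' ∈ B
            · refine hVIOL n q' w x hnB hq'B hwseg.1 hwseg.2.1 hwseg.2.2 ?_
                ((@Relation.ReflTransGen.stdSymm _ _ ⟨fun _ _ h => hsymF h⟩).symm _ _ hwchain)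
              have hfa : d'.fst = x := by rw [hp]
              rw [← hfa]
              exact SimpleGraph.Walk.dart_fst_mem_support_of_mem_darts _ hd'
            · refine ih ⟨q', hq'B, c, ⟨?_, hcWg, hcWh⟩, Relation.ReflTransGen.refl⟩
              have hsa : d'.snd = c := by rw [hp]
              rw [← hsa]
              exact SimpleGraph.Walk.dart_snd_mem_support_of_mem_darts _ hd'
          · exact hNoEnterChainH c hrest hcWh
        · exact ih ⟨n, hnB, w, hwseg, hwchain.tail hfree⟩
    -- first exit of the wet chain out of `R(Z g, S)`
    have hFE : ∀ x : V, Relation.ReflTransGen (M.step (Z g \ C)) x (dh j₀).fst →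
        ((x ∈ Rside G (Z g) S → ∃ q : Fin p, zg q ∉ Z g \ C ∧
            Relation.ReflTransGen (OutStep M (Rside G (Z g) S)) (dg q).snd (dh j₀).fst) ∧
         (x ∉ Rside G (Z g) S →
            Relation.ReflTransGen (OutStep M (Rside G (Z g) S)) x (dh j₀).fst)) := by
      intro x hx
      induction hx using Relation.ReflTransGen.head_induction_on with
      | refl =>
        exact ⟨fun hW => absurd hW (hfst_not_Wg j₀), fun _ => Relation.ReflTransGen.refl⟩
      | @head a c hstep hrest ih =>
        constructor
        · intro haW
          by_cases hcW : c ∈ Rside G (Z g) S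
          · exact ih.1 hcW
          · have hadj : G.Adj a c := step_or_adj hstep.1
            have hzZ : s(a, c) ∈ Z g := boundary_mem haW hcW hadj
            obtain ⟨q, hq⟩ := hzg_surj _ hzZ
            have hqD : zg q ∉ Z g \ C := by
              rw [hq]
              exact hstep.2
            have harc : M.Arc a c := by
              rcases hstep.1 with harc | hfree
              · exact harc
              · exact absurd ⟨q, hq ▸ hzg_edges q⟩ hfree.2
            obtain ⟨q', d', hd', hp⟩ := harc
            have hde : d'.edge = zg q := by
              rw [dart_edge_eq, show d'.fst = a from by rw [hp],
                show d'.snd = c from by rw [hp], hq]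
            have hq'q : q' = q := by
              by_contra hne
              exact M.edgeDisj q' q hne _ (edge_mem_of_dart_mem hd') (hde ▸ hzg_edges q)
            have hdd : d' = dg q := hdg_uniq q d' (hq'q ▸ hd') hde
            have hc_eq : c = (dg q).snd := by rw [← hdd, hp]
            exact ⟨q, hqD, hc_eq ▸ ih.2 hcW⟩
        · intro haW
          by_cases hcW : c ∈ Rside G (Z g) S
          · exact (hNoEnterG a c hstep.1 haW hcW).elim
          · exact (ih.2 hcW).head ⟨hstep.1, haW, hcW⟩
    obtain ⟨q0, hq0D, hρ⟩ := (hFE s0 hchain0).1 (mem_rside hs0)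
    have hq0C : zg q0 ∈ C := by
      by_contra hc
      exact hq0D (Finset.mem_sdiff.mpr ⟨hzg_mem q0, hc⟩)
    have hq0B : zh q0 ∉ B := (hkey q0).mp hq0C
    have hg1k : g < k := by omega
    have hzg_not_next : zg q0 ∉ Z (g + 1) := by
      intro hmem
      have hes := minEdgeCut_mem_edgeSet (hZ.2.2.2.1 g hg1 hg1k).1.1 _ hmem
      rw [← hdg_edge q0, dart_edge_eq] at hes
      exact (deprive_adj ((SimpleGraph.mem_edgeSet _).mp hes)).2.1 (hdg_fst q0)
    have hhead_Wh : (dg q0).snd ∈ Rside G (Z h) S := by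
      have h1' : (dg q0).fst ∈ Rside G (Z (g + 1)) S :=
        rside_mono_succ hZ hg1 hg1k (hdg_fst q0)
      have h2' : (dg q0).snd ∈ Rside G (Z (g + 1)) S := by
        refine rside_closure h1' (dg q0).adj ?_
        have heq : s((dg q0).fst, (dg q0).snd) = zg q0 := by
          rw [← dart_edge_eq, hdg_edge]
        rw [heq]
        exact hzg_not_next
      exact rside_mono hZ (by omega) h (by omega) hhk h2'
    refine hKEY _ hρ ⟨q0, hq0B, (dg q0).snd,
      ⟨SimpleGraph.Walk.dart_snd_mem_support_of_mem_darts _ (hdg_mem q0), hdg_snd q0, hhead_Wh⟩,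
      Relation.ReflTransGen.refl⟩
end
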